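/- Let n ≥ 1, let B be a nondegenerate symmetric ℚ-bilinear form on ℚⁿ, let ℓ ≥ 1 be an integer, and write e(x) := exp(2πi·x) for x ∈ ℚ. Let Λ_R ⊆ Λ₁ and Λ_R ⊆ Λ₂ be lattices in ℚⁿ, let Λ' ⊆ Λ_R be a finite-index subgroup of Λ_R, and let g: Λ₁ × Λ₂ → ℂˣ be biadditive and invariant under translation by Λ_R in each argument. Suppose that the assignment (λ + Λ', μ + Λ') ↦ e(−B(λ,μ)/ℓ)·g(λ,μ) is a well-defined map f̂: (Λ₁/Λ') × (Λ₂/Λ') → ℂˣ and that f̂ is a perfect pairing. Then Λ' = {α ∈ Λ_R : B(α,μ) ∈ ℓℤ for all μ ∈ Λ₁} = {α ∈ Λ_R : B(α,μ) ∈ ℓℤ for all μ ∈ Λ₂}. -/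

import Mathlib

/-- A lattice in `ℚⁿ`: a subgroup generated by a `ℚ`-basis. -/
def IsLattice {n : ℕ} (L : AddSubgroup (Fin n → ℚ)) : Prop :=
  ∃ b : Module.Basis (Fin n) ℚ (Fin n → ℚ), L = AddSubgroup.closure (Set.range b)

/-- The dual lattice `L^B` of `L` with respect to a bilinear form `B`. -/
def dualLattice {n : ℕ} (B : (Fin n → ℚ) →ₗ[ℚ] (Fin n → ℚ) →ₗ[ℚ] ℚ)
    (L : AddSubgroup (Fin n → ℚ)) : AddSubgroup (Fin n → ℚ) where
  carrier := {x | ∀ y ∈ L, ∃ k : ℤ, B x y = (k : ℚ)}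
  zero_mem' := fun y _ => ⟨0, by simp⟩
  add_mem' := by
    intro a b ha hb y hy
    obtain ⟨k, hk⟩ := ha y hy
    obtain ⟨m, hm⟩ := hb y hy
    exact ⟨k + m, by simp [map_add, hk, hm]⟩
  neg_mem' := by
    intro a ha y hy
    obtain ⟨k, hk⟩ := ha y hy
    exact ⟨-k, by simp [hk]⟩

/-- The lattice `ℓ·L`. -/
def smulLat {n : ℕ} (ℓ : ℕ) (L : AddSubgroup (Fin n → ℚ)) : AddSubgroup (Fin n → ℚ) :=
  L.map (DistribMulAction.toAddMonoidHom (Fin n → ℚ) ((ℓ : ℚ)))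

/-- `e(x) = exp(2πi·x)`. -/
noncomputable def ee (x : ℚ) : ℂ := Complex.exp (2 * Real.pi * Complex.I * (x : ℂ))


lemma ee_ne_zero (x : ℚ) : ee x ≠ 0 := Complex.exp_ne_zero _

lemma ee_eq_one_iff (x : ℚ) : ee x = 1 ↔ ∃ k : ℤ, x = (k : ℚ) := by
  unfold ee
  rw [Complex.exp_eq_one_iff]
  constructor
  · rintro ⟨k, hk⟩
    refine ⟨k, ?_⟩
    have h2 : (2 * Real.pi * Complex.I : ℂ) ≠ 0 :=
      mul_ne_zero (mul_ne_zero two_ne_zero (by exact_mod_cast Real.pi_ne_zero))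
        Complex.I_ne_zero
    have h3 : 2 * Real.pi * Complex.I * (x : ℂ)
        = 2 * Real.pi * Complex.I * (k : ℂ) := by rw [hk]; ring
    have : (x : ℂ) = (k : ℂ) := mul_left_cancel₀ h2 h3
    exact_mod_cast this
  · rintro ⟨k, hk⟩
    exact ⟨k, by rw [hk]; push_cast; ring⟩

lemma ee_eq_ee_iff (x y : ℚ) : ee x = ee y ↔ ∃ k : ℤ, x - y = (k : ℚ) := by
  rw [← ee_eq_one_iff]
  unfold ee
  rw [Complex.exp_eq_exp_iff_exp_sub_eq_one]
  have h : (2 * Real.pi * Complex.I * ((x - y : ℚ) : ℂ))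
      = 2 * Real.pi * Complex.I * x - 2 * Real.pi * Complex.I * y := by
    push_cast; ring
  rw [h]

/-- if `f̂(λ+Λ',μ+Λ') = e(−B(λ,μ)/ℓ)·g(λ,μ)` is a well-defined
perfect pairing `(Λ₁/Λ') × (Λ₂/Λ') → ℂˣ`, then
`Λ' = {α ∈ Λ_R : B(α,μ) ∈ ℓℤ ∀ μ ∈ Λ₁} = {α ∈ Λ_R : B(α,μ) ∈ ℓℤ ∀ μ ∈ Λ₂}`.
Well-definedness and perfectness are stated element-wise (a radical being
trivial in the quotient means it is contained in `Λ'`). -/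
theorem stmt1 {n : ℕ} (hn : 1 ≤ n)
    (B : (Fin n → ℚ) →ₗ[ℚ] (Fin n → ℚ) →ₗ[ℚ] ℚ)
    (hBsymm : ∀ x y, B x y = B y x)
    (hBnd : ∀ x, (∀ y, B x y = 0) → x = 0)
    (ℓ : ℕ) (hℓ : 1 ≤ ℓ)
    (ΛR Λ₁ Λ₂ Λ' : AddSubgroup (Fin n → ℚ))
    (hΛR : IsLattice ΛR) (hΛ₁ : IsLattice Λ₁) (hΛ₂ : IsLattice Λ₂)
    (hsub₁ : ΛR ≤ Λ₁) (hsub₂ : ΛR ≤ Λ₂) (hsub' : Λ' ≤ ΛR)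
    (hfin : Finite (ΛR ⧸ Λ'.addSubgroupOf ΛR))
    (g : (Fin n → ℚ) → (Fin n → ℚ) → ℂˣ)
    (hg1 : ∀ lam lam' μ, lam ∈ Λ₁ → lam' ∈ Λ₁ → μ ∈ Λ₂ →
      g (lam + lam') μ = g lam μ * g lam' μ)
    (hg2 : ∀ lam μ μ', lam ∈ Λ₁ → μ ∈ Λ₂ → μ' ∈ Λ₂ →
      g lam (μ + μ') = g lam μ * g lam μ')
    (hginv1 : ∀ lam μ α, lam ∈ Λ₁ → μ ∈ Λ₂ → α ∈ ΛR → g (lam + α) μ = g lam μ)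
    (hginv2 : ∀ lam μ α, lam ∈ Λ₁ → μ ∈ Λ₂ → α ∈ ΛR → g lam (μ + α) = g lam μ)
    -- well-definedness of `f̂` on `(Λ₁/Λ') × (Λ₂/Λ')`:
    (hwell : ∀ lam μ α, lam ∈ Λ₁ → μ ∈ Λ₂ → α ∈ Λ' →
      (ee (-(B (lam + α) μ) / ℓ) * (g (lam + α) μ : ℂ)
          = ee (-(B lam μ) / ℓ) * (g lam μ : ℂ)) ∧
      (ee (-(B lam (μ + α)) / ℓ) * (g lam (μ + α) : ℂ)
          = ee (-(B lam μ) / ℓ) * (g lam μ : ℂ)))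
    -- perfectness of `f̂`: both radicals are trivial in the quotients:
    (hperfL : ∀ lam ∈ Λ₁, (∀ μ ∈ Λ₂, ee (-(B lam μ) / ℓ) * (g lam μ : ℂ) = 1) →
        lam ∈ Λ')
    (hperfR : ∀ μ ∈ Λ₂, (∀ lam ∈ Λ₁, ee (-(B lam μ) / ℓ) * (g lam μ : ℂ) = 1) →
        μ ∈ Λ') :
    (Λ' : Set (Fin n → ℚ))
        = {α | α ∈ ΛR ∧ ∀ μ ∈ Λ₁, ∃ k : ℤ, B α μ = (ℓ : ℚ) * (k : ℚ)} ∧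
    (Λ' : Set (Fin n → ℚ))
        = {α | α ∈ ΛR ∧ ∀ μ ∈ Λ₂, ∃ k : ℤ, B α μ = (ℓ : ℚ) * (k : ℚ)} := by

  have hℓ0 : (ℓ : ℚ) ≠ 0 := by positivity
  -- g lam 0 = 1 for lam ∈ Λ₁, and g 0 μ = 1 for μ ∈ Λ₂
  have hg0r : ∀ lam ∈ Λ₁, g lam 0 = 1 := by
    intro lam hl
    have := hg2 lam 0 0 hl Λ₂.zero_mem Λ₂.zero_mem
    rw [add_zero] at this
    exact left_eq_mul.mp this
  have hg0l : ∀ μ ∈ Λ₂, g 0 μ = 1 := by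
    intro μ hμ
    have := hg1 0 0 μ Λ₁.zero_mem Λ₁.zero_mem hμ
    rw [add_zero] at this
    exact left_eq_mul.mp this
  -- membership in Λ' implies the divisibility conditions
  have key : ∀ α ∈ Λ', (∀ μ ∈ Λ₁, ∃ k : ℤ, B α μ = (ℓ : ℚ) * k) ∧
      (∀ μ ∈ Λ₂, ∃ k : ℤ, B α μ = (ℓ : ℚ) * k) := by
    intro α hα
    have hαR : α ∈ ΛR := hsub' hα
    constructor
    · intro μ hμ
      have h := (hwell μ 0 α hμ Λ₂.zero_mem hα).2
      rw [hginv2 μ 0 α hμ Λ₂.zero_mem hαR] at h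
      have hu : (g μ 0 : ℂ) ≠ 0 := (g μ 0).ne_zero
      have hee : ee (-(B μ (0 + α)) / ℓ) = ee (-(B μ 0) / ℓ) :=
        mul_right_cancel₀ hu h
      rw [ee_eq_ee_iff] at hee
      obtain ⟨k, hk⟩ := hee
      refine ⟨-k, ?_⟩
      rw [hBsymm α μ]
      have : B μ (0 + α) = B μ α := by rw [zero_add]
      rw [this, map_zero] at hk
      field_simp at hk ⊢
      push_cast
      linarith
    · intro μ hμ
      have h := (hwell 0 μ α Λ₁.zero_mem hμ hα).1
      rw [hginv1 0 μ α Λ₁.zero_mem hμ hαR] at h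
      have hu : (g 0 μ : ℂ) ≠ 0 := (g 0 μ).ne_zero
      have hee : ee (-(B (0 + α) μ) / ℓ) = ee (-(B 0 μ) / ℓ) :=
        mul_right_cancel₀ hu h
      rw [ee_eq_ee_iff] at hee
      obtain ⟨k, hk⟩ := hee
      refine ⟨-k, ?_⟩
      have h0 : B (0 + α) μ = B α μ := by rw [zero_add]
      rw [h0, map_zero, LinearMap.zero_apply] at hk
      field_simp at hk ⊢
      push_cast
      linarith
  constructor
  · ext α
    simp only [SetLike.mem_coe, Set.mem_setOf_eq]
    constructor
    · intro hα
      exact ⟨hsub' hα, (key α hα).1⟩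
    · rintro ⟨hαR, hdiv⟩
      apply hperfR α (hsub₂ hαR)
      intro lam hlam
      obtain ⟨k, hk⟩ := hdiv lam hlam
      have hg : g lam α = 1 := by
        have := hginv2 lam 0 α hlam Λ₂.zero_mem hαR
        rw [zero_add] at this
        rw [this, hg0r lam hlam]
      rw [hg]
      have : ee (-(B lam α) / ℓ) = 1 := by
        rw [ee_eq_one_iff]
        refine ⟨-k, ?_⟩
        rw [hBsymm lam α, hk]
        push_cast
        field_simp
      simp [this]
  · ext α
    simp only [SetLike.mem_coe, Set.mem_setOf_eq]
    constructor
    · intro hα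
      exact ⟨hsub' hα, (key α hα).2⟩
    · rintro ⟨hαR, hdiv⟩
      apply hperfL α (hsub₁ hαR)
      intro μ hμ
      obtain ⟨k, hk⟩ := hdiv μ hμ
      have hg : g α μ = 1 := by
        have := hginv1 0 μ α Λ₁.zero_mem hμ hαR
        rw [zero_add] at this
        rw [this, hg0l μ hμ]
      rw [hg]
      have : ee (-(B α μ) / ℓ) = 1 := by
        rw [ee_eq_one_iff]
        refine ⟨-k, ?_⟩
        rw [hk]
        push_cast
        field_simp
      simp [this]
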